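/- Let X be a nonempty set and 𝓛 a space of abstract linear functions on X containing the zero function. Let f₁, …, f_m : X → ℝ ∪ {+∞} (m ≥ 2) and let x ∈ ⋂_{i=1}^m dom f_i. The following are equivalent: (i) 0 ∈ ⋂_{ε>0} ( ∂_ε f₁(x) + ⋯ + ∂_ε f_m(x) ); (ii) (f₁ + ⋯ + f_m)*(0) = (f₁* □ ⋯ □ f_m*)(0) < +∞ and x is a global minimizer of f₁ + ⋯ + f_m over X. -/

import Mathlib

open Set
open scoped Pointwise

variable {X : Type*}

/-- A space of abstract linear functions on `X`: a nonempty family of real-valued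
functions closed under addition, each of whose members admits additive decompositions
of every length `m ≥ 1` inside the family. -/
def IsLinSpace (L : Set (X → ℝ)) : Prop :=
  L.Nonempty ∧
    (∀ l₁ ∈ L, ∀ l₂ ∈ L, l₁ + l₂ ∈ L) ∧
    (∀ l ∈ L, ∀ m : ℕ, 1 ≤ m →
      ∃ g : Fin m → (X → ℝ), (∀ i, g i ∈ L) ∧ l = ∑ i, g i)

/-- Fenchel conjugate of `f : X → ℝ ∪ {+∞}`: `f*(l) = sup_x (l x - f x)`. -/
noncomputable def fconj (f : X → EReal) (l : X → ℝ) : EReal :=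
  ⨆ x : X, ((l x : EReal) - f x)

/-- Abstract biconjugate `f**(x) = sup_{l ∈ L} (l x - f*(l))`. -/
noncomputable def biconj (L : Set (X → ℝ)) (f : X → EReal) (x : X) : EReal :=
  ⨆ l ∈ L, ((l x : EReal) - fconj f l)

/-- ε-subdifferential of `f` at `x` (empty whenever `x ∉ dom f`, i.e. `f x = ⊤`):
`l ∈ ∂_ε f(x)` iff `l ∈ L`, `f x < ⊤` and `f y - f x - (l y - l x) + ε ≥ 0` for all `y`. -/
def subdiff (L : Set (X → ℝ)) (f : X → EReal) (ε : ℝ) (x : X) : Set (X → ℝ) :=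
  {l | l ∈ L ∧ f x < ⊤ ∧ ∀ y, f x + ((l y - l x : ℝ) : EReal) ≤ f y + (ε : EReal)}

/-- Minkowski sum of finitely many subsets of an additive commutative monoid. -/
def minkSum {α : Type*} [AddCommMonoid α] {m : ℕ} (S : Fin m → Set α) : Set α :=
  {a | ∃ g : Fin m → α, (∀ i, g i ∈ S i) ∧ a = ∑ i, g i}

/-- Infimal convolution (over `L`) of finitely many functions,
with the infimum over the empty set equal to `+∞`. -/
noncomputable def infConv (L : Set (X → ℝ)) {m : ℕ}
    (φ : Fin m → (X → ℝ) → EReal) (l : X → ℝ) : EReal :=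
  ⨅ (g : Fin m → (X → ℝ)) (_ : ∀ i, g i ∈ L) (_ : ∑ i, g i = l), ∑ i, φ i (g i)

/-- The space of abstract affine functions generated by `L`: vertical shifts of members of `L`. -/
def Hspace (L : Set (X → ℝ)) : Set (X → ℝ) :=
  {h | ∃ l ∈ L, ∃ c : ℝ, h = fun x => l x + c}

/-- Support set of `f` inside a family `H` of functions: all members of `H` minorizing `f`. -/
def suppIn (H : Set (X → ℝ)) (f : X → EReal) : Set (X → ℝ) :=
  {h | h ∈ H ∧ ∀ x, (h x : EReal) ≤ f x}

/-- `f` is abstract convex w.r.t. the family `H`: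
`f` is the upper envelope of a nonempty subfamily of `H`. -/
def ConvexIn (H : Set (X → ℝ)) (f : X → EReal) : Prop :=
  ∃ S : Set (X → ℝ), S.Nonempty ∧ S ⊆ H ∧ ∀ x, f x = ⨆ h ∈ S, (h x : EReal)

/-- Abstract convexity of a subset `C` of the family `L` (separation property):
every `l₀ ∈ L \ C` is strictly separated from `C` at some point of `X`. -/
def ConvexSetIn (L : Set (X → ℝ)) (C : Set (X → ℝ)) : Prop :=
  C ⊆ L ∧ ∀ l₀ ∈ L, l₀ ∉ C → ∃ x, (⨆ l ∈ C, (l x : EReal)) < (l₀ x : EReal)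

/-- Epigraph of the conjugate of `f`, as a subset of `𝓛 × ℝ`. -/
def epiConj (L : Set (X → ℝ)) (f : X → EReal) : Set ((X → ℝ) × ℝ) :=
  {p | p.1 ∈ L ∧ fconj f p.1 ≤ (p.2 : EReal)}


private lemma ereal_coe_sum {ι : Type*} (s : Finset ι) (a : ι → ℝ) :
    ((∑ i ∈ s, a i : ℝ) : EReal) = ∑ i ∈ s, (a i : EReal) := by
  induction s using Finset.cons_induction with
  | empty => simp
  | cons i s hi ih => rw [Finset.sum_cons, Finset.sum_cons, EReal.coe_add, ih]

private lemma ereal_le_of_forall (c : ℝ) (z : EReal)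
    (h : ∀ ε : ℝ, 0 < ε → z ≤ ((c + ε : ℝ) : EReal)) : z ≤ (c : EReal) := by
  induction z with
  | bot => exact bot_le
  | coe b =>
      have : ∀ ε : ℝ, 0 < ε → b ≤ c + ε := fun ε hε => by exact_mod_cast h ε hε
      exact_mod_cast le_of_forall_pos_le_add this
  | top => exact ((EReal.coe_lt_top (c+1)).not_ge (h 1 one_pos)).elim

private lemma ereal_ge_of_forall (c : ℝ) (z : EReal)
    (h : ∀ ε : ℝ, 0 < ε → (c : EReal) ≤ z + (ε : EReal)) : (c : EReal) ≤ z := by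
  induction z with
  | bot =>
      have := h 1 one_pos
      rw [EReal.bot_add] at this
      exact (((bot_lt_iff_ne_bot.mpr (EReal.coe_ne_bot c)).not_ge) this).elim
  | coe b =>
      have : ∀ ε : ℝ, 0 < ε → c ≤ b + ε := fun ε hε => by exact_mod_cast h ε hε
      exact_mod_cast le_of_forall_pos_le_add this
  | top => exact le_top

private lemma subdiff_iff' (L : Set (X → ℝ)) (f : X → EReal) (hfb : ∀ y, f y ≠ ⊥)
    (a ε : ℝ) (x : X) (hfx : f x = (a : EReal)) (l : X → ℝ) :
    l ∈ subdiff L f ε x ↔ l ∈ L ∧ fconj f l ≤ ((l x - a + ε : ℝ) : EReal) := by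
  have key : ∀ y, (f x + ((l y - l x : ℝ) : EReal) ≤ f y + (ε : EReal)) ↔
      ((l y : EReal) - f y ≤ ((l x - a + ε : ℝ) : EReal)) := by
    intro y
    rcases eq_or_ne (f y) ⊤ with hy | hy
    · rw [hy]
      simp [EReal.top_add_of_ne_bot (EReal.coe_ne_bot ε), EReal.sub_top]
    · have hby : f y = ((f y).toReal : EReal) := (EReal.coe_toReal hy (hfb y)).symm
      rw [hfx, hby]
      norm_cast
      constructor <;> intro h <;> linarith
  constructor
  · rintro ⟨hl, -, h⟩
    exact ⟨hl, iSup_le fun y => (key y).mp (h y)⟩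
  · rintro ⟨hl, h⟩
    exact ⟨hl, hfx ▸ EReal.coe_lt_top a, fun y => (key y).mpr (le_trans (le_iSup (fun y => ((l y : EReal) - f y)) y) h)⟩

/-- for `x ∈ ⋂ dom f_i`, `0 ∈ ⋂_{ε > 0} (∂_ε f₁(x) + ⋯ + ∂_ε f_m(x))`
iff zero duality gap holds (conjugate of the sum equals the infimal convolution of the
conjugates at `0`, finitely) and `x` is a global minimizer of `f₁ + ⋯ + f_m`. -/
theorem stmt11 [Nonempty X] (L : Set (X → ℝ)) (hL : IsLinSpace L)
    (h0 : (0 : X → ℝ) ∈ L)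
    (m : ℕ) (hm : 2 ≤ m) (f : Fin m → X → EReal) (hf : ∀ i y, f i y ≠ ⊥)
    (x : X) (hx : ∀ i, f i x < ⊤) :
    ((0 : X → ℝ) ∈ ⋂ (ε : ℝ) (_ : 0 < ε),
        minkSum fun i => subdiff L (f i) ε x) ↔
      (fconj (fun y => ∑ i, f i y) 0 = infConv L (fun i => fconj (f i)) 0 ∧
        fconj (fun y => ∑ i, f i y) 0 < ⊤ ∧
        ∀ y : X, ∑ i, f i x ≤ ∑ i, f i y) := by
  classical
  have ha : ∀ i, f i x = (((f i x).toReal : ℝ) : EReal) :=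
    fun i => (EReal.coe_toReal (hx i).ne (hf i x)).symm
  set a : Fin m → ℝ := fun i => (f i x).toReal with ha_def
  set A : ℝ := ∑ i, a i with hA_def
  have hsum_x : ∑ i, f i x = (A : EReal) := by
    rw [hA_def, ereal_coe_sum]
    exact Finset.sum_congr rfl fun i _ => ha i
  have hconj_ge : ((-A : ℝ) : EReal) ≤ fconj (fun y => ∑ i, f i y) 0 := by
    have := le_iSup (fun y => (((0 : X → ℝ) y : ℝ) : EReal) - ∑ i, f i y) x
    simpa [fconj, hsum_x, zero_sub, ← EReal.coe_neg] using this
  have hconj_le_of_min : (∀ y, (A : EReal) ≤ ∑ i, f i y) →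
      fconj (fun y => ∑ i, f i y) 0 ≤ ((-A : ℝ) : EReal) := by
    intro hmin
    refine iSup_le fun y => ?_
    simp only [Pi.zero_apply, EReal.coe_zero, zero_sub, EReal.coe_neg]
    exact EReal.neg_le_neg_iff.mpr (hmin y)
  have hb : ∀ (g : Fin m → X → ℝ) (i : Fin m),
      ((g i x - a i : ℝ) : EReal) ≤ fconj (f i) (g i) := by
    intro g i
    have := le_iSup (fun y => ((g i y : ℝ) : EReal) - f i y) x
    rw [ha i, ← EReal.coe_sub] at this
    exact this
  have hmpos : (0 : ℝ) < (m : ℝ) := by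
    have : 0 < m := lt_of_lt_of_le (by norm_num) hm
    exact_mod_cast this
  constructor
  · intro hmem
    have hmem' : ∀ ε : ℝ, 0 < ε → ∃ g : Fin m → X → ℝ,
        (∀ i, g i ∈ subdiff L (f i) ε x) ∧ (0 : X → ℝ) = ∑ i, g i := by
      intro ε hε
      exact Set.mem_iInter₂.mp hmem ε hε
    have hmin : ∀ y, (A : EReal) ≤ ∑ i, f i y := by
      intro y
      refine ereal_ge_of_forall A _ fun δ hδ => ?_
      obtain ⟨g, hg, hg0⟩ := hmem' (δ / m) (by positivity)
      have hgy : ∑ i, g i y = 0 := by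
        have := congrFun hg0 y
        simpa [Finset.sum_apply] using this.symm
      have hgx : ∑ i, g i x = 0 := by
        have := congrFun hg0 x
        simpa [Finset.sum_apply] using this.symm
      have h1 : ∀ i, ((a i + (g i y - g i x) : ℝ) : EReal) ≤ f i y + ((δ / m : ℝ) : EReal) := by
        intro i
        have h2 := (hg i).2.2 y
        rw [ha i] at h2
        rw [EReal.coe_add]
        exact h2
      have h3 := Finset.sum_le_sum (fun i (_ : i ∈ Finset.univ) => h1 i)
      rw [← ereal_coe_sum] at h3
      have h5 : ∑ i, (a i + (g i y - g i x)) = A := by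
        rw [Finset.sum_add_distrib, Finset.sum_sub_distrib, hgy, hgx]
        simp [hA_def]
      rw [h5, Finset.sum_add_distrib] at h3
      have h6 : ∑ _i : Fin m, ((δ / m : ℝ) : EReal) = ((δ : ℝ) : EReal) := by
        rw [← ereal_coe_sum]
        congr 1
        rw [Finset.sum_const, Finset.card_univ, Fintype.card_fin, nsmul_eq_mul]
        field_simp
      rwa [h6] at h3
    have hval : fconj (fun y => ∑ i, f i y) 0 = ((-A : ℝ) : EReal) :=
      le_antisymm (hconj_le_of_min hmin) hconj_ge
    have hIC_ge : ((-A : ℝ) : EReal) ≤ infConv L (fun i => fconj (f i)) 0 := by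
      refine le_iInf fun g => le_iInf fun hg => le_iInf fun hgsum => ?_
      have hgx : ∑ i, g i x = 0 := by
        have := congrFun hgsum x
        simpa [Finset.sum_apply] using this
      calc ((-A : ℝ) : EReal) = ((∑ i, (g i x - a i) : ℝ) : EReal) := by
            congr 1
            rw [Finset.sum_sub_distrib, hgx]
            simp [hA_def]
        _ = ∑ i, ((g i x - a i : ℝ) : EReal) := ereal_coe_sum _ _
        _ ≤ ∑ i, fconj (f i) (g i) := Finset.sum_le_sum fun i _ => hb g i
    have hIC_le : infConv L (fun i => fconj (f i)) 0 ≤ ((-A : ℝ) : EReal) := by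
      refine ereal_le_of_forall _ _ fun δ hδ => ?_
      obtain ⟨g, hg, hg0⟩ := hmem' (δ / m) (by positivity)
      have hgx : ∑ i, g i x = 0 := by
        have := congrFun hg0 x
        simpa [Finset.sum_apply] using this.symm
      have hfle : ∀ i, fconj (f i) (g i) ≤ ((g i x - a i + δ / m : ℝ) : EReal) := fun i =>
        ((subdiff_iff' L (f i) (hf i) (a i) (δ / m) x (ha i) (g i)).mp (hg i)).2
      have hle : infConv L (fun i => fconj (f i)) 0 ≤ ∑ i, fconj (f i) (g i) :=
        iInf_le_of_le g (iInf_le_of_le (fun i => (hg i).1) (iInf_le_of_le hg0.symm le_rfl))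
      refine hle.trans ?_
      calc ∑ i, fconj (f i) (g i) ≤ ∑ i, ((g i x - a i + δ / m : ℝ) : EReal) :=
            Finset.sum_le_sum fun i _ => hfle i
        _ = ((∑ i, (g i x - a i + δ / m) : ℝ) : EReal) := (ereal_coe_sum _ _).symm
        _ = ((-A + δ : ℝ) : EReal) := by
            congr 1
            rw [Finset.sum_add_distrib, Finset.sum_sub_distrib, hgx, Finset.sum_const,
              Finset.card_univ, Fintype.card_fin, nsmul_eq_mul]
            field_simp
            rw [hA_def]; ring
    refine ⟨hval.trans (le_antisymm hIC_le hIC_ge).symm, ?_, fun y => ?_⟩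
    · rw [hval]; exact EReal.coe_lt_top _
    · rw [hsum_x]; exact hmin y
  · rintro ⟨hgap, hlt, hmin0⟩
    have hmin : ∀ y, (A : EReal) ≤ ∑ i, f i y := fun y => by
      rw [← hsum_x]; exact hmin0 y
    have hval : fconj (fun y => ∑ i, f i y) 0 = ((-A : ℝ) : EReal) :=
      le_antisymm (hconj_le_of_min hmin) hconj_ge
    have hIC : infConv L (fun i => fconj (f i)) 0 = ((-A : ℝ) : EReal) := hgap ▸ hval
    refine Set.mem_iInter₂.mpr fun ε hε => ?_
    have hlt2 : infConv L (fun i => fconj (f i)) 0 < ((-A + ε : ℝ) : EReal) := by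
      rw [hIC]
      exact_mod_cast (by linarith : -A < -A + ε)
    obtain ⟨g, hgL, hgsum, hglt⟩ : ∃ g : Fin m → X → ℝ, (∀ i, g i ∈ L) ∧ (∑ i, g i = 0) ∧
        ∑ i, fconj (f i) (g i) < ((-A + ε : ℝ) : EReal) := by
      rw [infConv, iInf_lt_iff] at hlt2
      obtain ⟨g, hg⟩ := hlt2
      rw [iInf_lt_iff] at hg
      obtain ⟨h1, hg⟩ := hg
      rw [iInf_lt_iff] at hg
      obtain ⟨h2, hg⟩ := hg
      exact ⟨g, h1, h2, hg⟩
    have hgx : ∑ i, g i x = 0 := by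
      have := congrFun hgsum x
      simpa [Finset.sum_apply] using this
    have hnb : ∀ i, fconj (f i) (g i) ≠ ⊥ := by
      intro i hbot
      have := hb g i
      rw [hbot, le_bot_iff] at this
      exact EReal.coe_ne_bot _ this
    have hbnd : ∀ j, fconj (f j) (g j) ≠ ⊤ := by
      intro j hj
      have h1 : ((∑ i ∈ Finset.univ.erase j, (g i x - a i) : ℝ) : EReal) ≤
          ∑ i ∈ Finset.univ.erase j, fconj (f i) (g i) := by
        rw [ereal_coe_sum]
        exact Finset.sum_le_sum fun i _ => hb g i
      have h2 : fconj (f j) (g j) + ∑ i ∈ Finset.univ.erase j, fconj (f i) (g i) =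
          ∑ i, fconj (f i) (g i) :=
        Finset.add_sum_erase Finset.univ (fun i => fconj (f i) (g i)) (Finset.mem_univ j)
      have h3 : ∑ i ∈ Finset.univ.erase j, fconj (f i) (g i) ≠ ⊥ := by
        intro hbot
        rw [hbot, le_bot_iff] at h1
        exact EReal.coe_ne_bot _ h1
      rw [hj, EReal.top_add_of_ne_bot h3] at h2
      rw [← h2] at hglt
      exact (not_top_lt) hglt
    have hr : ∀ i, fconj (f i) (g i) = (((fconj (f i) (g i)).toReal : ℝ) : EReal) :=
      fun i => (EReal.coe_toReal (hbnd i) (hnb i)).symm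
    set r : Fin m → ℝ := fun i => (fconj (f i) (g i)).toReal with hr_def
    have hri : ∀ i, g i x - a i ≤ r i := by
      intro i
      have := hb g i
      rw [hr i] at this
      exact_mod_cast this
    have hrsum : ∑ i, r i < -A + ε := by
      have h5 : ∑ i, fconj (f i) (g i) = ((∑ i, r i : ℝ) : EReal) := by
        rw [ereal_coe_sum]
        exact Finset.sum_congr rfl fun i _ => hr i
      rw [h5] at hglt
      exact_mod_cast hglt
    have hkey : ∀ j, r j ≤ g j x - a j + ε := by
      intro j
      have h6 : ∑ i ∈ Finset.univ.erase j, (g i x - a i) ≤ ∑ i ∈ Finset.univ.erase j, r i :=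
        Finset.sum_le_sum fun i _ => hri i
      have h7 : r j + ∑ i ∈ Finset.univ.erase j, r i = ∑ i, r i :=
        Finset.add_sum_erase Finset.univ r (Finset.mem_univ j)
      have h8 : (g j x - a j) + ∑ i ∈ Finset.univ.erase j, (g i x - a i) =
          ∑ i, (g i x - a i) :=
        Finset.add_sum_erase Finset.univ (fun i => g i x - a i) (Finset.mem_univ j)
      have h9 : ∑ i, (g i x - a i) = -A := by
        rw [Finset.sum_sub_distrib, hgx]
        simp [hA_def]
      linarith
    refine ⟨g, fun i => ?_, hgsum.symm⟩
    refine (subdiff_iff' L (f i) (hf i) (a i) ε x (ha i) (g i)).mpr ⟨hgL i, ?_⟩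
    rw [hr i]
    exact_mod_cast hkey i
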